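/- For all nonnegative integers n, m, p, all nonnegative integers a and all positive integers b, c, the following identity holds in ℚ(q): Σ_{k=0}^{n} Σ_{l=0}^{n−k} (−1)^k · q^{a·C(n−k−l,2)+b·C(k,2)} · [p+n−k−l choose p]_{q^c} · [m+1 choose k]_{q^b} · [m+l choose m]_{q^b} = q^{a·C(n,2)} · [p+n choose p]_{q^c}. -/

import Mathlib

/-- The Gaussian (q-)binomial coefficient `[a choose b]` with parameter `x`,
`∏_{j=1}^{b} (1 - x^{a-b+j})/(1 - x^j)`, an element of `ℚ(q)` when `x = q`;
it is zero when `b > a`. -/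
noncomputable def qbinom (x : RatFunc ℚ) (a b : ℕ) : RatFunc ℚ :=
  if b ≤ a then ∏ j ∈ Finset.range b, (1 - x ^ (a - b + j + 1)) / (1 - x ^ (j + 1)) else 0

/-- The indeterminate `q` of the field of rational functions `ℚ(q)`. -/
noncomputable def q : RatFunc ℚ := RatFunc.X

open Finset

noncomputable def qfac (x : RatFunc ℚ) (n : ℕ) : RatFunc ℚ :=
  ∏ j ∈ Finset.range n, (1 - x ^ (j + 1))

section basic

variable {x : RatFunc ℚ}

lemma one_sub_ne (hx : ∀ i : ℕ, x ^ (i + 1) ≠ 1) (i : ℕ) : (1 : RatFunc ℚ) - x ^ (i + 1) ≠ 0 :=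
  sub_ne_zero.2 (Ne.symm (hx i))

lemma qfac_ne_zero (hx : ∀ i : ℕ, x ^ (i + 1) ≠ 1) (n : ℕ) : qfac x n ≠ 0 :=
  Finset.prod_ne_zero_iff.2 fun i _ => one_sub_ne hx i

lemma qfac_succ (n : ℕ) : qfac x (n + 1) = qfac x n * (1 - x ^ (n + 1)) :=
  Finset.prod_range_succ _ _

lemma qbinom_zero_right (a : ℕ) : qbinom x a 0 = 1 := by
  simp [qbinom]

lemma qbinom_eq_zero {a b : ℕ} (h : a < b) : qbinom x a b = 0 := by
  simp [qbinom, not_le.2 h]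

lemma qbinom_self (hx : ∀ i : ℕ, x ^ (i + 1) ≠ 1) (n : ℕ) : qbinom x n n = 1 := by
  rw [qbinom, if_pos le_rfl]
  refine Finset.prod_eq_one fun j _ => ?_
  rw [Nat.sub_self, Nat.zero_add]
  exact div_self (one_sub_ne hx j)

lemma qbinom_eq_div (hx : ∀ i : ℕ, x ^ (i + 1) ≠ 1) {a b : ℕ} (h : b ≤ a) :
    qbinom x a b = qfac x a / (qfac x b * qfac x (a - b)) := by
  obtain ⟨d, rfl⟩ : ∃ d, a = b + d := ⟨a - b, by omega⟩
  rw [Nat.add_sub_cancel_left]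
  rw [qbinom, if_pos (Nat.le_add_right _ _)]
  have h1 : ∀ j ∈ Finset.range b, (1 - x ^ (b + d - b + j + 1)) / (1 - x ^ (j + 1))
      = (1 - x ^ (d + j + 1)) / (1 - x ^ (j + 1)) := by
    intro j _
    rw [Nat.add_sub_cancel_left]
  rw [Finset.prod_congr rfl h1, Finset.prod_div_distrib]
  have h2 : qfac x (b + d) = qfac x d * ∏ j ∈ Finset.range b, (1 - x ^ (d + j + 1)) := by
    rw [qfac, add_comm b d, Finset.prod_range_add]
    rfl
  rw [h2, div_mul_eq_div_div_swap]
  congr 1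
  rw [mul_comm, mul_div_assoc, div_self (qfac_ne_zero hx d), mul_one]

lemma qbinom_pascal1 (hx : ∀ i : ℕ, x ^ (i + 1) ≠ 1) (n k : ℕ) :
    qbinom x (n + 1) (k + 1) = qbinom x n k + x ^ (k + 1) * qbinom x n (k + 1) := by
  rcases lt_trichotomy k n with h | h | h
  · obtain ⟨d, rfl⟩ : ∃ d, n = k + d + 1 := ⟨n - k - 1, by omega⟩
    rw [qbinom_eq_div hx (show k + 1 ≤ k + d + 1 + 1 by omega),
      qbinom_eq_div hx (show k ≤ k + d + 1 by omega),
      qbinom_eq_div hx (show k + 1 ≤ k + d + 1 by omega),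
      show k + d + 1 + 1 - (k + 1) = d + 1 from by omega,
      show k + d + 1 - k = d + 1 from by omega,
      show k + d + 1 - (k + 1) = d from by omega,
      qfac_succ (k + d + 1), qfac_succ k, qfac_succ d]
    have hk := qfac_ne_zero hx k
    have hd := qfac_ne_zero hx d
    have hkd := qfac_ne_zero hx (k + d + 1)
    have h1 := one_sub_ne hx k
    have h2 := one_sub_ne hx d
    field_simp
    ring
  · subst h
    rw [qbinom_self hx, qbinom_self hx, qbinom_eq_zero (Nat.lt_succ_self k), mul_zero, add_zero]
  · rw [qbinom_eq_zero (show n < k from h), qbinom_eq_zero (show n + 1 < k + 1 by omega),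
      qbinom_eq_zero (show n < k + 1 by omega)]
    simp

lemma qbinom_pascal2 (hx : ∀ i : ℕ, x ^ (i + 1) ≠ 1) (n k : ℕ) :
    qbinom x (n + 1) (k + 1) = x ^ (n - k) * qbinom x n k + qbinom x n (k + 1) := by
  rcases lt_trichotomy k n with h | h | h
  · obtain ⟨d, rfl⟩ : ∃ d, n = k + d + 1 := ⟨n - k - 1, by omega⟩
    rw [show k + d + 1 - k = d + 1 from by omega]
    rw [qbinom_eq_div hx (show k + 1 ≤ k + d + 1 + 1 by omega),
      qbinom_eq_div hx (show k ≤ k + d + 1 by omega),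
      qbinom_eq_div hx (show k + 1 ≤ k + d + 1 by omega),
      show k + d + 1 + 1 - (k + 1) = d + 1 from by omega,
      show k + d + 1 - k = d + 1 from by omega,
      show k + d + 1 - (k + 1) = d from by omega,
      qfac_succ (k + d + 1), qfac_succ k, qfac_succ d]
    have hk := qfac_ne_zero hx k
    have hd := qfac_ne_zero hx d
    have hkd := qfac_ne_zero hx (k + d + 1)
    have h1 := one_sub_ne hx k
    have h2 := one_sub_ne hx d
    field_simp
    ring
  · subst h
    rw [qbinom_self hx, qbinom_self hx, qbinom_eq_zero (Nat.lt_succ_self k),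
      Nat.sub_self, pow_zero, one_mul, add_zero]
  · rw [qbinom_eq_zero (show n < k from h), qbinom_eq_zero (show n + 1 < k + 1 by omega),
      qbinom_eq_zero (show n < k + 1 by omega)]
    simp

end basic

noncomputable def Ssum (x : RatFunc ℚ) (m j : ℕ) : RatFunc ℚ :=
  ∑ k ∈ Finset.range (j + 1),
    (-1 : RatFunc ℚ) ^ k * x ^ Nat.choose k 2 * qbinom x m k * qbinom x (m + (j - k)) m

noncomputable def Tsum (x : RatFunc ℚ) (m j : ℕ) : RatFunc ℚ :=
  ∑ k ∈ Finset.range (j + 1),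
    (-1 : RatFunc ℚ) ^ k * x ^ Nat.choose k 2 * qbinom x (m + 1) k * qbinom x (m + (j - k)) m

section sums

variable {x : RatFunc ℚ} (hx : ∀ i : ℕ, x ^ (i + 1) ≠ 1)
include hx

set_option linter.unusedSectionVars false

lemma Tsum_zero (m : ℕ) : Tsum x m 0 = 1 := by
  simp [Tsum, qbinom_zero_right, qbinom_self hx]

lemma Ssum_zero (m : ℕ) : Ssum x m 0 = 1 := by
  simp [Ssum, qbinom_zero_right, qbinom_self hx]

lemma TS (m j : ℕ) : Tsum x m (j + 1) = Ssum x m (j + 1) - x ^ m * Ssum x m j := by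
  have key : Tsum x m (j + 1) - Ssum x m (j + 1) = - (x ^ m * Ssum x m j) := by
    rw [Tsum, Ssum, ← Finset.sum_sub_distrib]
    have step : ∀ k,
        (-1 : RatFunc ℚ) ^ k * x ^ Nat.choose k 2 * qbinom x (m + 1) k * qbinom x (m + (j + 1 - k)) m -
          (-1) ^ k * x ^ Nat.choose k 2 * qbinom x m k * qbinom x (m + (j + 1 - k)) m
        = (-1) ^ k * x ^ Nat.choose k 2 * (qbinom x (m + 1) k - qbinom x m k) *
            qbinom x (m + (j + 1 - k)) m := by
      intro k; ring
    rw [Finset.sum_congr rfl fun k _ => step k]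
    rw [Finset.sum_range_succ']
    have f0 : (-1 : RatFunc ℚ) ^ 0 * x ^ Nat.choose 0 2 * (qbinom x (m + 1) 0 - qbinom x m 0) *
        qbinom x (m + (j + 1 - 0)) m = 0 := by
      rw [qbinom_zero_right, qbinom_zero_right, sub_self, mul_zero, zero_mul]
    rw [f0, add_zero]
    rw [Ssum, Finset.mul_sum, ← Finset.sum_neg_distrib]
    refine Finset.sum_congr rfl fun k hk => ?_
    have hdiff : qbinom x (m + 1) (k + 1) - qbinom x m (k + 1) = x ^ (m - k) * qbinom x m k := by
      have := qbinom_pascal2 hx m k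
      rw [this]; ring
    rw [hdiff]
    have hsub : j + 1 - (k + 1) = j - k := by omega
    rw [hsub]
    rcases le_or_gt k m with hkm | hkm
    · have hexp : x ^ Nat.choose (k + 1) 2 * x ^ (m - k) = x ^ Nat.choose k 2 * x ^ m := by
        rw [← pow_add, ← pow_add]
        congr 1
        have : Nat.choose (k + 1) 2 = Nat.choose k 2 + k := by
          rw [Nat.choose_succ_succ]
          simp [Nat.choose_one_right, Nat.add_comm]
        omega
      linear_combination (-(-1 : RatFunc ℚ) ^ k * qbinom x m k * qbinom x (m + (j - k)) m) * hexp
    · simp only [qbinom_eq_zero hkm]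
      ring
  linear_combination key
  
lemma SB (m j : ℕ) :
    Ssum x (m + 1) (j + 1) = Tsum x m (j + 1) + x ^ (m + 1) * Ssum x (m + 1) j := by
  have step : ∀ k ∈ Finset.range (j + 2),
      (-1 : RatFunc ℚ) ^ k * x ^ Nat.choose k 2 * qbinom x (m + 1) k *
        qbinom x (m + 1 + (j + 1 - k)) (m + 1)
      = (-1) ^ k * x ^ Nat.choose k 2 * qbinom x (m + 1) k * qbinom x (m + (j + 1 - k)) m
        + x ^ (m + 1) * ((-1) ^ k * x ^ Nat.choose k 2 * qbinom x (m + 1) k *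
            qbinom x (m + (j + 1 - k)) (m + 1)) := by
    intro k _
    rw [show m + 1 + (j + 1 - k) = m + (j + 1 - k) + 1 by omega,
      qbinom_pascal1 hx (m + (j + 1 - k)) m]
    ring
  rw [Ssum, Finset.sum_congr rfl step, Finset.sum_add_distrib]
  congr 1
  rw [← Finset.mul_sum, Finset.sum_range_succ]
  have hlast : qbinom x (m + (j + 1 - (j + 1))) (m + 1) = 0 := by
    rw [Nat.sub_self, Nat.add_zero]
    exact qbinom_eq_zero (Nat.lt_succ_self m)
  rw [hlast, mul_zero, add_zero]
  congr 1
  rw [Ssum]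
  refine Finset.sum_congr rfl fun k hk => ?_
  have hk' : k ≤ j := by simpa [Nat.lt_succ_iff] using hk
  rw [show m + (j + 1 - k) = m + 1 + (j - k) by omega]

lemma Ssum_eq (m : ℕ) : ∀ j, Ssum x m j = x ^ (m * j) := by
  induction m with
  | zero =>
    intro j
    rw [Nat.zero_mul, pow_zero, Ssum]
    rw [Finset.sum_eq_single 0]
    · simp [qbinom_zero_right]
    · intro k _ hk
      obtain ⟨k', rfl⟩ : ∃ k', k = k' + 1 := ⟨k - 1, by omega⟩
      rw [qbinom_eq_zero (Nat.succ_pos k'), mul_zero, zero_mul]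
    · intro h
      exact absurd (Finset.mem_range.2 (Nat.succ_pos j)) h
  | succ m ih =>
    intro j
    induction j with
    | zero => rw [Ssum_zero hx, Nat.mul_zero, pow_zero]
    | succ j ihj =>
      have hT : Tsum x m (j + 1) = 0 := by
        rw [TS hx, ih, ih, ← pow_add, show m + m * j = m * (j + 1) by ring, sub_self]
      rw [SB hx, hT, ihj, zero_add, ← pow_add]
      congr 1
      ring

lemma Tsum_succ_eq_zero (m j : ℕ) : Tsum x m (j + 1) = 0 := by
  rw [TS hx, Ssum_eq hx, Ssum_eq hx, ← pow_add]
  rw [show m + m * j = m * (j + 1) by ring, sub_self]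

end sums

lemma triangle {M : Type*} [AddCommMonoid M] (n : ℕ) (f : ℕ → ℕ → M) :
    ∑ k ∈ Finset.range (n + 1), ∑ l ∈ Finset.range (n - k + 1), f k l
      = ∑ j ∈ Finset.range (n + 1), ∑ k ∈ Finset.range (j + 1), f k (j - k) := by
  rw [Finset.sum_sigma', Finset.sum_sigma']
  refine Finset.sum_nbij' (fun a : (Σ _ : ℕ, ℕ) => (⟨a.1 + a.2, a.1⟩ : Σ _ : ℕ, ℕ))
    (fun a : (Σ _ : ℕ, ℕ) => (⟨a.2, a.1 - a.2⟩ : Σ _ : ℕ, ℕ)) ?_ ?_ ?_ ?_ ?_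
  · rintro ⟨k, l⟩ hm
    simp only [Finset.mem_sigma, Finset.mem_range] at hm ⊢
    omega
  · rintro ⟨j, k⟩ hm
    simp only [Finset.mem_sigma, Finset.mem_range] at hm ⊢
    omega
  · rintro ⟨k, l⟩ _
    simp
  · rintro ⟨j, k⟩ hm
    simp only [Finset.mem_sigma, Finset.mem_range] at hm
    exact Sigma.ext (by simp; omega) (by simp)
  · rintro ⟨k, l⟩ _
    simp

lemma q_pow_ne_one : ∀ i : ℕ, (0 < i) → q ^ i ≠ 1 := by
  intro i hi h
  have hinj := IsFractionRing.injective (Polynomial ℚ) (RatFunc ℚ)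
  have : (Polynomial.X : Polynomial ℚ) ^ i = 1 := by
    apply hinj
    rw [map_pow, map_one, RatFunc.algebraMap_X]
    exact h
  have := congrArg Polynomial.natDegree this
  rw [Polynomial.natDegree_X_pow, Polynomial.natDegree_one] at this
  omega

theorem stmt_19 (n m p a b c : ℕ) (hb : 0 < b) (hc : 0 < c) :
    ∑ k ∈ Finset.range (n + 1), ∑ l ∈ Finset.range (n - k + 1),
      (-1 : RatFunc ℚ) ^ k *
        q ^ (a * Nat.choose (n - k - l) 2 + b * Nat.choose k 2) *
        qbinom (q ^ c) (p + (n - k - l)) p * qbinom (q ^ b) (m + 1) k *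
        qbinom (q ^ b) (m + l) m
    = q ^ (a * Nat.choose n 2) * qbinom (q ^ c) (p + n) p := by
  have hq : ∀ i : ℕ, (q ^ b) ^ (i + 1) ≠ 1 := by
    intro i
    rw [← pow_mul]
    exact q_pow_ne_one _ (by positivity)
  refine Eq.trans (triangle n _) ?_
  rw [Finset.sum_eq_single 0]
  · rw [Finset.sum_range_one]
    simp [qbinom_zero_right, qbinom_self hq, Nat.choose]
  · intro j hj hj0
    obtain ⟨j', rfl⟩ : ∃ j', j = j' + 1 := ⟨j - 1, by omega⟩
    have hjn : j' + 1 ≤ n := by simpa [Nat.lt_succ_iff] using hj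
    have step : ∀ k ∈ Finset.range (j' + 1 + 1),
        (-1 : RatFunc ℚ) ^ k *
          q ^ (a * Nat.choose (n - k - (j' + 1 - k)) 2 + b * Nat.choose k 2) *
          qbinom (q ^ c) (p + (n - k - (j' + 1 - k))) p * qbinom (q ^ b) (m + 1) k *
          qbinom (q ^ b) (m + (j' + 1 - k)) m
        = q ^ (a * Nat.choose (n - (j' + 1)) 2) * qbinom (q ^ c) (p + (n - (j' + 1))) p *
            ((-1) ^ k * (q ^ b) ^ Nat.choose k 2 * qbinom (q ^ b) (m + 1) k *
              qbinom (q ^ b) (m + (j' + 1 - k)) m) := by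
      intro k hk
      have hk' : k ≤ j' + 1 := by simpa [Nat.lt_succ_iff] using hk
      rw [show n - k - (j' + 1 - k) = n - (j' + 1) by omega, pow_add, pow_mul]
      ring
    rw [Finset.sum_congr rfl step, ← Finset.mul_sum]
    have : (∑ k ∈ Finset.range (j' + 1 + 1),
        ((-1 : RatFunc ℚ) ^ k * (q ^ b) ^ Nat.choose k 2 * qbinom (q ^ b) (m + 1) k *
          qbinom (q ^ b) (m + (j' + 1 - k)) m)) = Tsum (q ^ b) m (j' + 1) := rfl
    rw [this, Tsum_succ_eq_zero hq, mul_zero]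
  · intro h
    exact absurd (Finset.mem_range.2 (Nat.succ_pos n)) h
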